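/- The minimum Hamming weight of a decreasing monomial code C(I) equals 2^{m - r+}, where r+ = r+(C(I)) is the largest r such that x_0 x_1 ··· x_{r-1} ∈ I (equivalently, the minimal r with C(I) ⊆ R(r,m)). -/

import Mathlib

/-- The partial order `⪯` on square-free monomials. -/
def preceq {m : ℕ} (S T : Finset (Fin m)) : Prop :=
  ∃ T' ⊆ T, T'.card = S.card ∧
    List.Forall₂ (· ≤ ·) (S.sort (· ≤ ·)) (T'.sort (· ≤ ·))

/-- A decreasing set of monomials. -/
def Decreasing {m : ℕ} (I : Finset (Finset (Fin m))) : Prop :=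
  ∀ f ∈ I, ∀ g, preceq g f → g ∈ I

/-- Evaluation vector of a square-free monomial. -/
def evalMon {m : ℕ} (S : Finset (Fin m)) : (Fin m → ZMod 2) → ZMod 2 :=
  fun u => ∏ i ∈ S, u i

/-- The monomial code `C(I)`. -/
def monomialCode {m : ℕ} (I : Finset (Finset (Fin m))) :
    Submodule (ZMod 2) ((Fin m → ZMod 2) → ZMod 2) :=
  Submodule.span (ZMod 2) (evalMon '' (I : Set (Finset (Fin m))))

/-- The monomial `x_0 x_1 ⋯ x_{r-1}`. -/
def initSeg (m r : ℕ) : Finset (Fin m) :=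
  Finset.univ.filter (fun i : Fin m => i.val < r)

/-- `r₊(C(I))`: the largest `r ≤ m` with `x_0⋯x_{r-1} ∈ I`. -/
noncomputable def rPlus {m : ℕ} (I : Finset (Finset (Fin m))) : ℕ :=
  sSup { r | r ≤ m ∧ initSeg m r ∈ I }

/-- Hamming weight of a codeword. -/
def wt {m : ℕ} (c : (Fin m → ZMod 2) → ZMod 2) : ℕ :=
  (Finset.univ.filter (fun u : Fin m → ZMod 2 => c u ≠ 0)).card

namespace Aux


lemma zmod2_cases (x : ZMod 2) : x = 0 ∨ x = 1 := by revert x; decide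

lemma wt_eq_zero_iff {m : ℕ} (c : (Fin m → ZMod 2) → ZMod 2) : wt c = 0 ↔ c = 0 := by
  constructor
  · intro h
    funext u
    simp only [wt, Finset.card_eq_zero, Finset.filter_eq_empty_iff, not_not] at h
    exact h (Finset.mem_univ u)
  · intro h
    subst h
    simp [wt]

lemma one_le_wt {m : ℕ} {c : (Fin m → ZMod 2) → ZMod 2} (hc : c ≠ 0) : 1 ≤ wt c := by
  rcases Nat.eq_zero_or_pos (wt c) with h | h
  · exact absurd ((wt_eq_zero_iff c).1 h) hc
  · exact h

lemma wt_add_le {m : ℕ} (c d : (Fin m → ZMod 2) → ZMod 2) : wt (c + d) ≤ wt c + wt d := by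
  classical
  refine le_trans (Finset.card_le_card ?_) (Finset.card_union_le _ _)
  intro u hu
  simp only [Finset.mem_filter, Finset.mem_union, Finset.mem_univ, true_and] at *
  by_contra h
  push_neg at h
  simp [Pi.add_apply, h.1, h.2] at hu

lemma wt_split {m : ℕ} (c : (Fin (m+1) → ZMod 2) → ZMod 2) :
    wt c = wt (fun v => c (Fin.cons 0 v)) + wt (fun v => c (Fin.cons 1 v)) := by
  classical
  have key : ∀ b : ZMod 2,
      ((Finset.univ.filter (fun u : Fin (m+1) → ZMod 2 => c u ≠ 0)).filter
        (fun u => u 0 = b)).card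
      = wt (fun v => c (Fin.cons b v)) := by
    intro b
    refine Finset.card_nbij' (fun u => Fin.tail u) (fun v => Fin.cons b v) ?_ ?_ ?_ ?_
    · intro u hu
      simp only [Finset.mem_coe, Finset.mem_filter, Finset.mem_univ, true_and, wt] at hu ⊢
      rw [show Fin.cons b (Fin.tail u) = u by rw [← hu.2]; exact Fin.cons_self_tail u]
      exact hu.1
    · intro v hv
      simp only [wt, Finset.mem_coe, Finset.mem_filter, Finset.mem_univ, true_and] at hv ⊢
      exact ⟨hv, Fin.cons_zero _ _⟩
    · intro u hu
      simp only [Finset.mem_coe, Finset.mem_filter] at hu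
      rw [← hu.2]; exact Fin.cons_self_tail u
    · intro v _
      exact Fin.tail_cons (α := fun _ => ZMod 2) b v
  rw [← key 0, ← key 1, wt,
    ← Finset.card_filter_add_card_filter_not
      (s := Finset.univ.filter (fun u : Fin (m+1) → ZMod 2 => c u ≠ 0)) (fun u => u 0 = 0)]
  congr 1
  congr 1
  apply Finset.filter_congr
  intro u _
  rcases zmod2_cases (u 0) with h | h <;> simp [h]



lemma zmod2_ne_zero_iff (x : ZMod 2) : x ≠ 0 ↔ x = 1 := by revert x; decide

/-- weight of a monomial evaluation vector -/
lemma wt_evalMon {m : ℕ} (S : Finset (Fin m)) : wt (evalMon S) = 2 ^ (m - S.card) := by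
  classical
  have hcond : ∀ u : Fin m → ZMod 2, evalMon S u ≠ 0 ↔ ∀ i ∈ S, u i = 1 := by
    intro u
    rw [evalMon, Finset.prod_ne_zero_iff]
    exact forall₂_congr fun i _ => zmod2_ne_zero_iff (u i)
  have h1 : wt (evalMon S) = Fintype.card {u : Fin m → ZMod 2 // ∀ i ∈ S, u i = 1} := by
    rw [wt, Fintype.card_subtype]
    congr 1
    apply Finset.filter_congr
    intro u _
    simp [hcond u]
  rw [h1]
  have e : {u : Fin m → ZMod 2 // ∀ i ∈ S, u i = 1} ≃ ({i : Fin m // i ∉ S} → ZMod 2) :=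
    { toFun := fun u i => u.1 i.1
      invFun := fun g => ⟨fun i => if h : i ∈ S then 1 else g ⟨i, h⟩, fun i hi => by simp [hi]⟩
      left_inv := by
        intro u
        ext i
        by_cases h : i ∈ S <;> simp [h, u.2 i]
      right_inv := by
        intro g
        funext i
        simp [i.2] }
  rw [Fintype.card_congr e, Fintype.card_fun]
  congr 1
  rw [Fintype.card_subtype_compl]
  simp [Fintype.card_coe]

def pull {m : ℕ} (S : Finset (Fin (m+1))) : Finset (Fin m) :=
  Finset.univ.filter (fun i => i.succ ∈ S)

lemma erase_eq_image_pull {m : ℕ} (S : Finset (Fin (m+1))) :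
    S.erase 0 = (pull S).image Fin.succ := by
  ext j
  induction j using Fin.cases with
  | zero => simp [pull, (Fin.succ_ne_zero _).symm, fun i : Fin m => (Fin.succ_ne_zero i)]
  | succ i =>
    simp only [Finset.mem_erase, Finset.mem_image, pull, Finset.mem_filter, Finset.mem_univ,
      true_and]
    constructor
    · rintro ⟨-, h⟩; exact ⟨i, h, rfl⟩
    · rintro ⟨a, ha, h⟩
      obtain rfl : a = i := Fin.succ_inj.1 h
      exact ⟨Fin.succ_ne_zero a, ha⟩

lemma card_pull {m : ℕ} (S : Finset (Fin (m+1))) : (pull S).card = (S.erase 0).card := by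
  rw [erase_eq_image_pull, Finset.card_image_of_injective _ (Fin.succ_injective m)]

lemma evalMon_cons {m : ℕ} (S : Finset (Fin (m+1))) (b : ZMod 2) (v : Fin m → ZMod 2) :
    evalMon S (Fin.cons b v) = (if (0 : Fin (m+1)) ∈ S then b else 1) * evalMon (pull S) v := by
  classical
  have herase : ∏ j ∈ S.erase 0, (Fin.cons b v : Fin (m+1) → ZMod 2) j = evalMon (pull S) v := by
    rw [erase_eq_image_pull, Finset.prod_image (fun a _ b _ h => Fin.succ_injective m h)]
    simp [evalMon, Fin.cons_succ]
  by_cases h0 : (0 : Fin (m+1)) ∈ S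
  · rw [evalMon, ← Finset.mul_prod_erase S _ h0, herase, if_pos h0, Fin.cons_zero]
  · rw [Finset.erase_eq_of_notMem h0] at herase
    rw [if_neg h0, one_mul, evalMon]
    exact herase

/-- span of monomials of degree at most `r` (= Reed-Muller code `R(r,m)`). -/
def spanLe (m r : ℕ) : Submodule (ZMod 2) ((Fin m → ZMod 2) → ZMod 2) :=
  Submodule.span (ZMod 2) (evalMon '' {S : Finset (Fin m) | S.card ≤ r})

/-- restriction map: set variable `x_0 := b`. -/
def restr (m : ℕ) (b : ZMod 2) :
    ((Fin (m+1) → ZMod 2) → ZMod 2) →ₗ[ZMod 2] ((Fin m → ZMod 2) → ZMod 2) :=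
  LinearMap.funLeft (ZMod 2) (ZMod 2) (Fin.cons (α := fun _ => ZMod 2) b)

lemma restr_apply {m : ℕ} (b : ZMod 2) (c : (Fin (m+1) → ZMod 2) → ZMod 2) (v : Fin m → ZMod 2) :
    restr m b c v = c (Fin.cons b v) := rfl

lemma restr_evalMon_zero {m : ℕ} (S : Finset (Fin (m+1))) :
    restr m 0 (evalMon S) = if (0 : Fin (m+1)) ∈ S then 0 else evalMon (pull S) := by
  funext v
  rw [restr_apply, evalMon_cons]
  split <;> simp

lemma restr_evalMon_one {m : ℕ} (S : Finset (Fin (m+1))) :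
    restr m 1 (evalMon S) = evalMon (pull S) := by
  funext v
  rw [restr_apply, evalMon_cons]
  split <;> simp

lemma card_pull_le {m : ℕ} (S : Finset (Fin (m+1))) : (pull S).card ≤ S.card := by
  rw [card_pull]; exact Finset.card_le_card (Finset.erase_subset _ _)

lemma restr_mem_spanLe {m r : ℕ} (b : ZMod 2) {c : (Fin (m+1) → ZMod 2) → ZMod 2}
    (hc : c ∈ spanLe (m+1) r) : restr m b c ∈ spanLe m r := by
  have hmap : restr m b c ∈ Submodule.map (restr m b) (spanLe (m+1) r) :=
    Submodule.mem_map_of_mem hc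
  rw [spanLe, ← Submodule.span_image] at hmap
  refine Submodule.span_le.2 ?_ hmap
  rintro - ⟨-, ⟨S, hS, rfl⟩, rfl⟩
  rcases zmod2_cases b with rfl | rfl
  · rw [restr_evalMon_zero]
    split
    · exact Submodule.zero_mem _
    · exact Submodule.subset_span ⟨pull S, le_trans (card_pull_le S) hS, rfl⟩
  · rw [restr_evalMon_one]
    exact Submodule.subset_span ⟨pull S, le_trans (card_pull_le S) hS, rfl⟩

lemma deriv_mem_spanLe {m r : ℕ} {c : (Fin (m+1) → ZMod 2) → ZMod 2}
    (hc : c ∈ spanLe (m+1) r) : restr m 0 c + restr m 1 c ∈ spanLe m (r - 1) := by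
  have hmap : restr m 0 c + restr m 1 c ∈
      Submodule.map (restr m 0 + restr m 1) (spanLe (m+1) r) :=
    Submodule.mem_map_of_mem (f := restr m 0 + restr m 1) hc
  rw [spanLe, ← Submodule.span_image] at hmap
  refine Submodule.span_le.2 ?_ hmap
  rintro - ⟨-, ⟨S, hS, rfl⟩, rfl⟩
  simp only [LinearMap.add_apply]
  rw [restr_evalMon_zero, restr_evalMon_one]
  by_cases h0 : (0 : Fin (m+1)) ∈ S
  · rw [if_pos h0, zero_add]
    refine Submodule.subset_span ⟨pull S, ?_, rfl⟩
    show (pull S).card ≤ r - 1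
    rw [card_pull, Finset.card_erase_of_mem h0]
    have : S.card ≤ r := hS
    omega
  · rw [if_neg h0]
    have hz : evalMon (pull S) + evalMon (pull S) = 0 := by
      funext v
      simp only [Pi.add_apply, Pi.zero_apply]
      exact CharTwo.add_self_eq_zero _
    rw [hz]
    exact Submodule.zero_mem _

/-- special case r = 0: the "derivative" vanishes. -/
lemma deriv_eq_zero_of_r_zero {m : ℕ} {c : (Fin (m+1) → ZMod 2) → ZMod 2}
    (hc : c ∈ spanLe (m+1) 0) : restr m 0 c + restr m 1 c = 0 := by
  have hmap : restr m 0 c + restr m 1 c ∈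
      Submodule.map (restr m 0 + restr m 1) (spanLe (m+1) 0) :=
    Submodule.mem_map_of_mem (f := restr m 0 + restr m 1) hc
  rw [spanLe, ← Submodule.span_image] at hmap
  have h : (restr m 0 + restr m 1) '' (evalMon '' {S : Finset (Fin (m+1)) | S.card ≤ 0})
      ⊆ ↑(⊥ : Submodule (ZMod 2) ((Fin m → ZMod 2) → ZMod 2)) := by
    rintro - ⟨-, ⟨S, hS, rfl⟩, rfl⟩
    simp only [Set.mem_setOf_eq, Nat.le_zero, Finset.card_eq_zero] at hS
    subst hS
    simp only [LinearMap.add_apply, SetLike.mem_coe, Submodule.mem_bot]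
    rw [restr_evalMon_zero, restr_evalMon_one, if_neg (Finset.notMem_empty _)]
    funext v
    simp only [Pi.add_apply, Pi.zero_apply]
    exact CharTwo.add_self_eq_zero _
  have h2 := Submodule.span_le.2 h hmap
  simpa using h2

theorem rm_bound : ∀ (m : ℕ) (r : ℕ) (c : (Fin m → ZMod 2) → ZMod 2),
    c ∈ spanLe m r → c ≠ 0 → 2 ^ (m - r) ≤ wt c := by
  intro m
  induction m with
  | zero =>
    intro r c _ hc
    simpa using one_le_wt hc
  | succ m ih =>
    intro r c hc hc0
    by_cases hrm : m + 1 ≤ r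
    · rw [Nat.sub_eq_zero_of_le hrm, pow_zero]
      exact one_le_wt hc0
    push_neg at hrm
    set f : (Fin m → ZMod 2) → ZMod 2 := fun v => c (Fin.cons 0 v) with hf
    set h : (Fin m → ZMod 2) → ZMod 2 := fun v => c (Fin.cons 1 v) with hh
    have hfmem : f ∈ spanLe m r := by exact restr_mem_spanLe 0 hc
    have hsplit : wt c = wt f + wt h := wt_split c
    by_cases hg : f + h = 0
    · have hfh : h = f := by
        funext v
        have hv : f v + h v = 0 := congrFun hg v
        rcases zmod2_cases (f v) with h1 | h1 <;> rcases zmod2_cases (h v) with h2 | h2 <;>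
          rw [h1, h2] at hv ⊢ <;> revert hv <;> decide
      have hf0 : f ≠ 0 := by
        intro h0
        apply hc0
        funext u
        have e0 : c (Fin.cons (0:ZMod 2) (Fin.tail u)) = 0 := congrFun h0 (Fin.tail u)
        have e1 : c (Fin.cons (1:ZMod 2) (Fin.tail u)) = 0 := congrFun (hfh.trans h0) (Fin.tail u)
        rcases zmod2_cases (u 0) with h' | h'
        · rw [← Fin.cons_self_tail u, h']; exact e0
        · rw [← Fin.cons_self_tail u, h']; exact e1
      have hwf : 2 ^ (m - r) ≤ wt f := ih r f hfmem hf0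
      have h2 : wt c = 2 * wt f := by rw [hsplit, hfh]; ring
      rw [h2]
      have : 2 ^ (m + 1 - r) = 2 * 2 ^ (m - r) := by
        rw [← pow_succ']
        congr 1
        omega
      omega
    · have hr1 : 1 ≤ r := by
        by_contra hr
        push_neg at hr
        interval_cases r
        exact hg (by exact deriv_eq_zero_of_r_zero hc)
      have hgmem : f + h ∈ spanLe m (r - 1) := by exact deriv_mem_spanLe hc
      have hwg : 2 ^ (m - (r-1)) ≤ wt (f + h) := ih (r-1) _ hgmem hg
      have hle : wt (f + h) ≤ wt f + wt h := wt_add_le f h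
      have hpw : 2 ^ (m + 1 - r) ≤ 2 ^ (m - (r - 1)) :=
        Nat.pow_le_pow_right (by norm_num) (by omega)
      omega



lemma initSeg_zero (m : ℕ) : initSeg m 0 = ∅ := by
  ext i; simp [initSeg]

lemma card_initSeg {m r : ℕ} (h : r ≤ m) : (initSeg m r).card = r := by
  have : initSeg m r = Finset.map (Fin.castLEEmb h) Finset.univ := by
    ext j
    simp only [initSeg, Finset.mem_filter, Finset.mem_univ, true_and, Finset.mem_map]
    constructor
    · intro hj
      exact ⟨⟨j.val, hj⟩, Fin.ext rfl⟩
    · rintro ⟨i, rfl⟩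
      exact i.isLt
  rw [this, Finset.card_map, Finset.card_univ, Fintype.card_fin]

lemma empty_mem {m : ℕ} {I : Finset (Finset (Fin m))} (hI : Decreasing I)
    (hne : I.Nonempty) : (∅ : Finset (Fin m)) ∈ I := by
  obtain ⟨f, hf⟩ := hne
  refine hI f hf ∅ ⟨∅, Finset.empty_subset f, by simp, ?_⟩
  simp only [Finset.sort_empty]
  exact List.Forall₂.nil

lemma strictMono_gap {n m : ℕ} {f : Fin n → Fin m} (hf : StrictMono f) :
    ∀ (d i : ℕ) (h : i + d < n), (f ⟨i, by omega⟩).val + d ≤ (f ⟨i + d, h⟩).val := by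
  intro d
  induction d with
  | zero => intro i h; simp
  | succ d ihd =>
    intro i h
    have h1 : i + d < n := by omega
    have h2 := ihd i h1
    have hlt : f ⟨i + d, h1⟩ < f ⟨i + (d + 1), h⟩ := hf (by simp [Fin.lt_def])
    rw [Fin.lt_def] at hlt
    omega

lemma strictMono_gap' {n m : ℕ} {f : Fin n → Fin m} (hf : StrictMono f) (i j : Fin n)
    (hij : i.val ≤ j.val) : (f i).val + (j.val - i.val) ≤ (f j).val := by
  have h' : i.val + (j.val - i.val) < n := by have := j.isLt; omega
  have e1 : f ⟨i.val, by omega⟩ = f i := congrArg f (Fin.ext rfl)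
  have e2 : f ⟨i.val + (j.val - i.val), h'⟩ = f j := congrArg f (Fin.ext (by simp; omega))
  have := strictMono_gap hf (j.val - i.val) i.val h'
  rw [e1, e2] at this
  exact this

/-- i-th element of any sorted finset has value ≥ i -/
lemma le_get_sort {m : ℕ} (S : Finset (Fin m)) (i : ℕ)
    (h : i < (S.sort (· ≤ ·)).length) :
    i ≤ ((S.sort (· ≤ ·)).get ⟨i, h⟩).val := by
  have hmono : StrictMono (S.sort (· ≤ ·)).get :=
    (Finset.sortedLT_sort S).strictMono_get
  have := strictMono_gap' hmono ⟨0, by omega⟩ ⟨i, h⟩ (by simp)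
  simp only [Fin.val_mk] at this
  omega

/-- i-th element of sorted initSeg has value ≤ i -/
lemma get_sort_initSeg_le {m k : ℕ} (hk : k ≤ m) (i : ℕ)
    (h : i < ((initSeg m k).sort (· ≤ ·)).length) :
    (((initSeg m k).sort (· ≤ ·)).get ⟨i, h⟩).val ≤ i := by
  have hlen : ((initSeg m k).sort (· ≤ ·)).length = k := by
    rw [Finset.length_sort, card_initSeg hk]
  have hmono : StrictMono ((initSeg m k).sort (· ≤ ·)).get :=
    (Finset.sortedLT_sort _).strictMono_get
  have hik : i < k := by omega
  have hkl : k - 1 < ((initSeg m k).sort (· ≤ ·)).length := by omega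
  have hmem : (((initSeg m k).sort (· ≤ ·)).get ⟨k - 1, hkl⟩).val < k := by
    have : ((initSeg m k).sort (· ≤ ·)).get ⟨k - 1, hkl⟩ ∈ initSeg m k :=
      (Finset.mem_sort _).1 (List.get_mem _ _)
    simpa [initSeg] using this
  have hgap := strictMono_gap' hmono ⟨i, h⟩ ⟨k - 1, hkl⟩ (by simp; omega)
  simp only [Fin.val_mk] at hgap
  omega

lemma preceq_initSeg {m : ℕ} (S : Finset (Fin m)) : preceq (initSeg m S.card) S := by
  have hk : S.card ≤ m := by
    simpa using Finset.card_le_card (Finset.subset_univ S)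
  refine ⟨S, Finset.Subset.refl S, (card_initSeg hk).symm, ?_⟩
  rw [List.forall₂_iff_get]
  constructor
  · rw [Finset.length_sort, Finset.length_sort, card_initSeg hk]
  · intro i h1 h2
    rw [Fin.le_def]
    calc (((initSeg m S.card).sort (· ≤ ·)).get ⟨i, h1⟩).val
        ≤ i := get_sort_initSeg_le hk i h1
      _ ≤ ((S.sort (· ≤ ·)).get ⟨i, h2⟩).val := le_get_sort S i h2

lemma rPlus_mem {m : ℕ} {I : Finset (Finset (Fin m))} (hI : Decreasing I)
    (hne : I.Nonempty) : rPlus I ≤ m ∧ initSeg m (rPlus I) ∈ I := by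
  have h0 : (0 : ℕ) ∈ {r | r ≤ m ∧ initSeg m r ∈ I} :=
    ⟨Nat.zero_le m, by rw [initSeg_zero]; exact empty_mem hI hne⟩
  exact Nat.sSup_mem ⟨0, h0⟩ ⟨m, fun x hx => hx.1⟩

lemma card_le_rPlus {m : ℕ} {I : Finset (Finset (Fin m))} (hI : Decreasing I)
    {S : Finset (Fin m)} (hS : S ∈ I) : S.card ≤ rPlus I := by
  have hk : S.card ≤ m := by simpa using Finset.card_le_card (Finset.subset_univ S)
  have hmem : S.card ∈ {r | r ≤ m ∧ initSeg m r ∈ I} :=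
    ⟨hk, hI S hS _ (preceq_initSeg S)⟩
  exact le_csSup ⟨m, fun x hx => hx.1⟩ hmem


end Aux

/-- the minimum Hamming weight of a decreasing monomial code
`C(I)` equals `2^{m - r₊(C(I))}`. -/
theorem minWeight_decreasing_monomialCode {m : ℕ} (I : Finset (Finset (Fin m)))
    (hI : Decreasing I) (hne : I.Nonempty) :
    (∃ c ∈ monomialCode I, c ≠ 0 ∧ wt c = 2 ^ (m - rPlus I)) ∧
    (∀ c ∈ monomialCode I, c ≠ 0 → 2 ^ (m - rPlus I) ≤ wt c) := by
  obtain ⟨hrm, hrI⟩ := Aux.rPlus_mem hI hne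
  constructor
  · refine ⟨evalMon (initSeg m (rPlus I)),
      Submodule.subset_span ⟨initSeg m (rPlus I), hrI, rfl⟩, ?_, ?_⟩
    · intro h0
      have h1 := congrFun h0 (fun _ => 1)
      exact (one_ne_zero : (1 : ZMod 2) ≠ 0) (by simp only [evalMon, Finset.prod_const_one] at h1; exact h1)
    · rw [Aux.wt_evalMon, Aux.card_initSeg hrm]
  · intro c hc hc0
    have hsub : monomialCode I ≤ Aux.spanLe m (rPlus I) := by
      rw [monomialCode]
      apply Submodule.span_le.2
      rintro - ⟨S, hS, rfl⟩
      exact Submodule.subset_span ⟨S, Aux.card_le_rPlus hI hS, rfl⟩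
    exact Aux.rm_bound m (rPlus I) c (hsub hc) hc0
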